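/- Let X and Y be normed spaces, U ⊆ Q ⊆ X with U open and Q closed, and let f : Q → Y be continuous, locally L-Lipschitz on U, and Lipschitz on Q \ U. Then f is Lipschitz on Q with Lip(f) ≤ max{L, Lip(f restricted to Q \ U)}. -/

import Mathlib

open Metric

private lemma seg_mem_closed {X : Type*} [NormedAddCommGroup X] [NormedSpace ℝ X]
    (Q : Set X) (hQ : IsClosed Q) (x v : X) (a : ℝ) (ha : 0 ≤ a) (hx : x ∈ Q)
    (hseg : ∀ t, 0 ≤ t → t < a → x + t • v ∈ Q) : x + a • v ∈ Q := by
  rcases ha.eq_or_lt with rfl | ha'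
  · simpa using hx
  · have hg : Continuous fun t : ℝ => x + t • v :=
      continuous_const.add (continuous_id.smul continuous_const)
    have htend : Filter.Tendsto (fun t : ℝ => x + t • v) (nhdsWithin a (Set.Iio a))
        (nhds (x + a • v)) := (hg.tendsto a).mono_left nhdsWithin_le_nhds
    refine hQ.mem_of_tendsto htend ?_
    filter_upwards [Ioo_mem_nhdsLT_of_mem (show a ∈ Set.Ioc 0 a from ⟨ha', le_refl a⟩)] with t ht
    exact hseg t ht.1.le ht.2

private lemma aux_seg {X Y : Type*} [NormedAddCommGroup X] [NormedSpace ℝ X]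
    [NormedAddCommGroup Y] [NormedSpace ℝ Y]
    (U Q : Set X) (hUQ : U ⊆ Q) (hU : IsOpen U) (hQ : IsClosed Q)
    (f : X → Y) (hcont : ContinuousOn f Q) (L : NNReal)
    (hloc : ∀ x ∈ U, ∃ ε : ℝ, 0 < ε ∧ ball x ε ⊆ U ∧ LipschitzOnWith L f (ball x ε))
    (x v : X) (a : ℝ) (ha : 0 ≤ a) (hxQ : x ∈ Q)
    (hseg : ∀ t, 0 ≤ t → t < a → x + t • v ∈ U) :
    dist (f (x + a • v)) (f x) ≤ L * (a * ‖v‖) := by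
  rcases ha.eq_or_lt with rfl | ha'
  · simp
  rcases eq_or_ne v 0 with rfl | hv
  · simp
  have hvpos : (0:ℝ) < ‖v‖ := norm_pos_iff.mpr hv
  set g : ℝ → X := fun t => x + t • v with hg_def
  have hgc : Continuous g := continuous_const.add (continuous_id.smul continuous_const)
  have hgaQ : g a ∈ Q :=
    seg_mem_closed Q hQ x v a ha hxQ (fun t ht0 hta => hUQ (hseg t ht0 hta))
  have hgQ : ∀ t ∈ Set.Icc (0:ℝ) a, g t ∈ Q := by
    intro t ht
    rcases lt_or_eq_of_le ht.2 with h | rfl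
    · exact hUQ (hseg t ht.1 h)
    · exact hgaQ
  have hdist : ∀ s t : ℝ, dist (g t) (g s) = |t - s| * ‖v‖ := by
    intro s t
    simp only [hg_def, dist_eq_norm]
    rw [show x + t • v - (x + s • v) = (t - s) • v by module, norm_smul, Real.norm_eq_abs]
  -- the set where the estimate holds
  set ψ : ℝ → ℝ := fun t => dist (f (g t)) (f x) - L * (t * ‖v‖) with hψ_def
  have hfg : ContinuousOn (f ∘ g) (Set.Icc 0 a) := hcont.comp hgc.continuousOn hgQ
  have hψcont : ContinuousOn ψ (Set.Icc 0 a) := by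
    apply ContinuousOn.sub
    · exact (continuous_id.dist continuous_const).comp_continuousOn hfg
    · exact (continuousOn_const.mul (continuous_id.continuousOn.mul continuousOn_const))
  set S : Set ℝ := Set.Icc 0 a ∩ ψ ⁻¹' Set.Iic 0 with hS_def
  have hSclosed : IsClosed S := hψcont.preimage_isClosed_of_isClosed isClosed_Icc isClosed_Iic
  have h0S : (0:ℝ) ∈ S := by
    refine ⟨⟨le_refl 0, ha⟩, ?_⟩
    show dist (f (g 0)) (f x) - (L:ℝ) * (0 * ‖v‖) ≤ 0
    have hg0 : g 0 = x := by show x + (0:ℝ) • v = x; simp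
    rw [hg0]
    simp
  have hbdd : BddAbove S := (BddAbove.mono Set.inter_subset_left) (bddAbove_Icc)
  set c := sSup S with hc_def
  have hcS : c ∈ S := hSclosed.csSup_mem ⟨0, h0S⟩ hbdd
  have hc0 : 0 ≤ c := hcS.1.1
  have hca : c ≤ a := hcS.1.2
  have hcbound : dist (f (g c)) (f x) ≤ L * (c * ‖v‖) := by
    have := hcS.2; simpa [hψ_def] using this
  rcases eq_or_lt_of_le hca with heq | hclt
  · rw [← heq]; exact hcbound
  -- c < a : derive a contradiction
  exfalso
  have hgcU : g c ∈ U := hseg c hc0 hclt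
  obtain ⟨ε, hε, hballU, hlip⟩ := hloc _ hgcU
  set t := min a (c + ε / (2 * ‖v‖)) with ht_def
  have hct : c < t := lt_min hclt (by nlinarith [div_pos hε (by positivity : (0:ℝ) < 2 * ‖v‖)])
  have hta : t ≤ a := min_le_left _ _
  have ht0 : 0 ≤ t := hc0.trans hct.le
  have htc2 : t - c ≤ ε / (2 * ‖v‖) := by
    have := min_le_right a (c + ε / (2 * ‖v‖)); linarith [this]
  have hgtball : g t ∈ ball (g c) ε := by
    rw [mem_ball, hdist]
    rw [abs_of_nonneg (by linarith)]
    calc (t - c) * ‖v‖ ≤ (ε / (2 * ‖v‖)) * ‖v‖ := by nlinarith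
    _ = ε / 2 := by field_simp
    _ < ε := by linarith
  have hgcball : g c ∈ ball (g c) ε := mem_ball_self hε
  have hlipd := lipschitzOnWith_iff_dist_le_mul.mp hlip (g t) hgtball (g c) hgcball
  rw [hdist] at hlipd
  rw [abs_of_nonneg (by linarith)] at hlipd
  have htS : t ∈ S := by
    refine ⟨⟨ht0, hta⟩, ?_⟩
    simp only [Set.mem_preimage, Set.mem_Iic, hψ_def]
    have htri : dist (f (g t)) (f x) ≤ dist (f (g t)) (f (g c)) + dist (f (g c)) (f x) :=
      dist_triangle _ _ _
    nlinarith [L.coe_nonneg]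
  exact absurd (le_csSup hbdd htS) (not_le.mpr hct)

/-- A continuous map that is locally `L`-Lipschitz on an open `U ⊆ Q` and Lipschitz on
`Q \ U` is Lipschitz on the closed set `Q` with constant `max L (Lip(f|_{Q\U}))`. -/
theorem stmt11 {X Y : Type*} [NormedAddCommGroup X] [NormedSpace ℝ X]
    [NormedAddCommGroup Y] [NormedSpace ℝ Y]
    (U Q : Set X) (hUQ : U ⊆ Q) (hU : IsOpen U) (hQ : IsClosed Q)
    (f : X → Y) (hcont : ContinuousOn f Q)
    (L M : NNReal)
    (hloc : ∀ x ∈ U, ∃ ε : ℝ, 0 < ε ∧ ball x ε ⊆ U ∧ LipschitzOnWith L f (ball x ε))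
    (hout : LipschitzOnWith M f (Q \ U)) :
    LipschitzOnWith (max L M) f Q := by
  rw [lipschitzOnWith_iff_dist_le_mul]
  intro x hx y hy
  set v := y - x with hv_def
  set g : ℝ → X := fun t => x + t • v with hg_def
  have hgc : Continuous g := continuous_const.add (continuous_id.smul continuous_const)
  have hg1 : g 1 = y := by simp [hg_def, hv_def]
  have hKL : (L:ℝ) ≤ (max L M : NNReal) := by
    exact_mod_cast le_max_left L M
  have hKM : (M:ℝ) ≤ (max L M : NNReal) := by
    exact_mod_cast le_max_right L M
  have hdxy : dist x y = ‖v‖ := by rw [dist_eq_norm, hv_def, ← norm_neg]; congr 1; abel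
  have hvnn : (0:ℝ) ≤ ‖v‖ := norm_nonneg v
  by_cases hT : ∀ t ∈ Set.Icc (0:ℝ) 1, g t ∈ U
  · -- whole segment in U
    have := aux_seg U Q hUQ hU hQ f hcont L hloc x v 1 zero_le_one hx
      (fun t ht0 ht1 => hT t ⟨ht0, ht1.le⟩)
    rw [show x + (1:ℝ) • v = y by simp [hv_def], dist_comm (f y) (f x)] at this
    rw [hdxy]
    calc dist (f x) (f y) ≤ L * (1 * ‖v‖) := this
    _ ≤ (max L M : NNReal) * ‖v‖ := by rw [one_mul]; exact mul_le_mul_of_nonneg_right hKL hvnn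
  · push_neg at hT
    set T : Set ℝ := Set.Icc 0 1 ∩ g ⁻¹' Uᶜ with hT_def
    have hTne : T.Nonempty := by
      obtain ⟨t, ht, htU⟩ := hT
      exact ⟨t, ht, htU⟩
    have hTclosed : IsClosed T := isClosed_Icc.inter (hU.isClosed_compl.preimage hgc)
    have hTbddA : BddAbove T := BddAbove.mono Set.inter_subset_left bddAbove_Icc
    have hTbddB : BddBelow T := BddBelow.mono Set.inter_subset_left bddBelow_Icc
    set a := sInf T with ha_def
    set b := sSup T with hb_def
    have haT : a ∈ T := hTclosed.csInf_mem hTne hTbddB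
    have hbT : b ∈ T := hTclosed.csSup_mem hTne hTbddA
    have hab : a ≤ b := csInf_le_csSup hTne hTbddB hTbddA
    have ha0 : 0 ≤ a := haT.1.1
    have hb1 : b ≤ 1 := hbT.1.2
    -- left piece
    have hsegx : ∀ t, 0 ≤ t → t < a → x + t • v ∈ U := by
      intro t ht0 hta
      by_contra h
      exact absurd (csInf_le hTbddB ⟨⟨ht0, hta.le.trans (haT.1.2)⟩, h⟩) (not_le.mpr hta)
    have d1 := aux_seg U Q hUQ hU hQ f hcont L hloc x v a ha0 hx hsegx
    -- right piece : from y with direction -v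
    have hyback : ∀ t : ℝ, y + t • (-v) = g (1 - t) := by
      intro t; simp only [hg_def, hv_def]; module
    have hsegy : ∀ t, 0 ≤ t → t < 1 - b → y + t • (-v) ∈ U := by
      intro t ht0 htb
      rw [hyback]
      by_contra h
      have h1tT : 1 - t ∈ T := ⟨⟨by linarith [hbT.1.1], by linarith⟩, h⟩
      have := le_csSup hTbddA h1tT
      linarith
    have d3 := aux_seg U Q hUQ hU hQ f hcont L hloc y (-v) (1 - b) (by linarith) hy hsegy
    rw [hyback, norm_neg, show (1:ℝ) - (1 - b) = b by ring] at d3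
    -- middle piece
    have hgaQ : g a ∈ Q :=
      seg_mem_closed Q hQ x v a ha0 hx (fun t ht0 hta => hUQ (hsegx t ht0 hta))
    have hgbQ : g b ∈ Q := by
      have := seg_mem_closed Q hQ y (-v) (1 - b) (by linarith) hy
        (fun t ht0 htb => hUQ (hsegy t ht0 htb))
      rwa [hyback, show (1:ℝ) - (1 - b) = b by ring] at this
    have hgab : g a ∈ Q \ U := ⟨hgaQ, haT.2⟩
    have hgbb : g b ∈ Q \ U := ⟨hgbQ, hbT.2⟩
    have d2 := lipschitzOnWith_iff_dist_le_mul.mp hout (g a) hgab (g b) hgbb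
    have hdistab : dist (g a) (g b) = (b - a) * ‖v‖ := by
      simp only [hg_def, dist_eq_norm]
      rw [show x + a • v - (x + b • v) = (a - b) • v by module, norm_smul, Real.norm_eq_abs,
        abs_of_nonpos (by linarith), neg_sub]
    rw [hdistab] at d2
    -- assemble
    have d1' : dist (f x) (f (g a)) ≤ (L:ℝ) * (a * ‖v‖) := by
      rw [dist_comm]; exact d1
    have htri : dist (f x) (f y) ≤
        dist (f x) (f (g a)) + dist (f (g a)) (f (g b)) + dist (f (g b)) (f y) :=
      dist_triangle4 _ _ _ _
    rw [hdxy]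
    calc dist (f x) (f y)
        ≤ L * (a * ‖v‖) + M * ((b - a) * ‖v‖) + L * ((1 - b) * ‖v‖) := by
          linarith [htri, d1', d2, d3]
    _ ≤ (max L M : NNReal) * (a * ‖v‖) + (max L M : NNReal) * ((b - a) * ‖v‖)
          + (max L M : NNReal) * ((1 - b) * ‖v‖) := by
          have h1 : (0:ℝ) ≤ a * ‖v‖ := by positivity
          have h2 : (0:ℝ) ≤ (b - a) * ‖v‖ := by nlinarith
          have h3 : (0:ℝ) ≤ (1 - b) * ‖v‖ := by nlinarith
          gcongr
    _ = (max L M : NNReal) * ‖v‖ := by ring
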